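/- Let μ_P and μ_N be probability measures on ℝ each supported in [0,1]; write E_+ = ∫ x dμ_P, E_− = ∫ y dμ_N, ΔE = E_− − E_+, Var_P = ∫ x² dμ_P − E_+², Var_N = ∫ y² dμ_N − E_−². Define H(a,b,γ) = ∫ (x−a)² dμ_P + ∫ (y−b)² dμ_N + 2ΔE + 2γ·ΔE − γ². Then min_{(a,b) ∈ [0,1]²} max_{γ ∈ [b−1, 1]} H(a,b,γ) = min_{(a,b) ∈ [0,1]²} max_{γ ∈ [−1, 1]} H(a,b,γ) = Var_P + Var_N + (ΔE)² + 2·ΔE; i.e., restricting the dual variable γ to the coupled interval [b−1, 1] does not change the min-max value of the OPAUC objective. -/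

import Mathlib

open MeasureTheory

/-- Constrained reformulation for OPAUC: restricting the dual variable `γ` to the
coupled interval `[b−1, 1]` does not change the min-max value of the objective
`H(a,b,γ) = ∫(x−a)² dμP + ∫(y−b)² dμN + 2ΔE + 2γΔE − γ²`, and this common value is
`Var_P + Var_N + (ΔE)² + 2ΔE`. -/
lemma aux_moments (μ : Measure ℝ) [IsProbabilityMeasure μ] (h : μ (Set.Icc 0 1) = 1) :
    (0 ≤ ∫ x, x ∂μ) ∧ (∫ x, x ∂μ ≤ 1) ∧
    (∀ a : ℝ, ∫ x, (x - a) ^ 2 ∂μ = (∫ x, x ^ 2 ∂μ) - 2 * a * (∫ x, x ∂μ) + a ^ 2) := by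
  have hae : ∀ᵐ x ∂μ, x ∈ Set.Icc (0:ℝ) 1 := by
    rw [ae_iff]
    have : {x : ℝ | ¬ x ∈ Set.Icc (0:ℝ) 1} = (Set.Icc (0:ℝ) 1)ᶜ := rfl
    rw [this, measure_compl measurableSet_Icc (measure_ne_top μ _), h, measure_univ]
    simp
  have h1 : Integrable (fun x : ℝ => x) μ := by
    refine (integrable_const (1:ℝ)).mono' measurable_id.aestronglyMeasurable ?_
    filter_upwards [hae] with x hx
    rw [Real.norm_eq_abs, abs_le]
    exact ⟨by linarith [hx.1], hx.2⟩
  have h2 : Integrable (fun x : ℝ => x ^ 2) μ := by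
    refine (integrable_const (1:ℝ)).mono' (measurable_id.pow_const 2).aestronglyMeasurable ?_
    filter_upwards [hae] with x hx
    rw [Real.norm_eq_abs, abs_le]
    constructor <;> nlinarith [hx.1, hx.2]
  refine ⟨?_, ?_, ?_⟩
  · exact integral_nonneg_of_ae (by filter_upwards [hae] with x hx using hx.1)
  · calc ∫ x, x ∂μ ≤ ∫ _, (1:ℝ) ∂μ := by
          refine integral_mono_ae h1 (integrable_const 1) ?_
          filter_upwards [hae] with x hx using hx.2
      _ = 1 := by simp
  · intro a
    have : ∀ x : ℝ, (x - a) ^ 2 = x ^ 2 - 2 * a * x + a ^ 2 := by intro x; ring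
    simp_rw [this]
    have hsub : Integrable (fun x : ℝ => x ^ 2 - 2 * a * x) μ := h2.sub (h1.const_mul (2 * a))
    rw [integral_add hsub (integrable_const _),
      integral_sub h2 (h1.const_mul (2 * a)), MeasureTheory.integral_const_mul, integral_const]
    simp

theorem stmt_13 (μP μN : Measure ℝ) [IsProbabilityMeasure μP] [IsProbabilityMeasure μN]
    (hP : μP (Set.Icc 0 1) = 1) (hN : μN (Set.Icc 0 1) = 1)
    (H : ℝ → ℝ → ℝ → ℝ)
    (hH : ∀ a b γ, H a b γ =
      (∫ x, (x - a) ^ 2 ∂μP) + (∫ y, (y - b) ^ 2 ∂μN)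
        + 2 * ((∫ y, y ∂μN) - (∫ x, x ∂μP))
        + 2 * γ * ((∫ y, y ∂μN) - (∫ x, x ∂μP)) - γ ^ 2) :
    ((⨅ a : Set.Icc (0 : ℝ) 1, ⨅ b : Set.Icc (0 : ℝ) 1,
        ⨆ γ : Set.Icc ((b : ℝ) - 1) 1, H a b γ) =
      ⨅ a : Set.Icc (0 : ℝ) 1, ⨅ b : Set.Icc (0 : ℝ) 1,
        ⨆ γ : Set.Icc (-1 : ℝ) 1, H a b γ) ∧
    ((⨅ a : Set.Icc (0 : ℝ) 1, ⨅ b : Set.Icc (0 : ℝ) 1,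
        ⨆ γ : Set.Icc (-1 : ℝ) 1, H a b γ) =
      ((∫ x, x ^ 2 ∂μP) - (∫ x, x ∂μP) ^ 2) + ((∫ y, y ^ 2 ∂μN) - (∫ y, y ∂μN) ^ 2)
        + ((∫ y, y ∂μN) - (∫ x, x ∂μP)) ^ 2
        + 2 * ((∫ y, y ∂μN) - (∫ x, x ∂μP))) := by
  obtain ⟨hEP0, hEP1, hQP⟩ := aux_moments μP hP
  obtain ⟨hEN0, hEN1, hQN⟩ := aux_moments μN hN
  set EP := ∫ x, x ∂μP with hEPdef
  set EN := ∫ y, y ∂μN with hENdef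
  set IP := ∫ x, x ^ 2 ∂μP with hIPdef
  set IN := ∫ y, y ^ 2 ∂μN with hINdef
  set d := EN - EP with hddef
  have hd1 : -1 ≤ d := by simp only [hddef]; linarith
  have hd2 : d ≤ 1 := by simp only [hddef]; linarith
  -- explicit form of H
  have hH' : ∀ a b γ : ℝ, H a b γ =
      (IP - 2 * a * EP + a ^ 2) + (IN - 2 * b * EN + b ^ 2) + 2 * d + 2 * γ * d - γ ^ 2 := by
    intro a b γ
    rw [hH, hQP, hQN]
  set V : ℝ := (IP - EP ^ 2) + (IN - EN ^ 2) + d ^ 2 + 2 * d with hVdef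
  -- upper bound on H over γ
  have claim1 : ∀ a b γ : ℝ, H a b γ ≤
      (IP - 2 * a * EP + a ^ 2) + (IN - 2 * b * EN + b ^ 2) + 2 * d + d ^ 2 := by
    intro a b γ
    rw [hH']
    nlinarith [sq_nonneg (γ - d)]
  -- lower bound at the special point of the coupled interval
  have claim2 : ∀ b : ℝ, b ∈ Set.Icc (0:ℝ) 1 → ∀ a : ℝ,
      V ≤ H a b (max (b - 1) d) := by
    intro b hb a
    rw [hH']
    rcases max_cases (b - 1) d with ⟨hm, hbd⟩ | ⟨hm, hbd⟩ <;> rw [hm]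
    · -- b - 1 ≥ d
      have h1 : (0:ℝ) ≤ b - 1 - d := by linarith
      have h2 : b - 1 - d ≤ b - EN := by simp only [hddef]; linarith
      nlinarith [sq_nonneg (a - EP), sq_nonneg (b - EN), sq_nonneg (b - 1 - d)]
    · nlinarith [sq_nonneg (a - EP), sq_nonneg (b - EN)]
  -- lower bound for the quadratic parts
  have claim3 : ∀ a b : ℝ,
      V ≤ (IP - 2 * a * EP + a ^ 2) + (IN - 2 * b * EN + b ^ 2) + 2 * d + d ^ 2 := by
    intro a b
    nlinarith [sq_nonneg (a - EP), sq_nonneg (b - EN)]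
  have hmemEP : EP ∈ Set.Icc (0:ℝ) 1 := ⟨hEP0, hEP1⟩
  have hmemEN : EN ∈ Set.Icc (0:ℝ) 1 := ⟨hEN0, hEN1⟩
  -- nonemptiness
  haveI : Nonempty (Set.Icc (0:ℝ) 1) := ⟨⟨0, by norm_num⟩⟩
  have hne : ∀ b : ℝ, b ∈ Set.Icc (0:ℝ) 1 → Nonempty (Set.Icc (b - 1) (1:ℝ)) := by
    intro b hb; exact ⟨⟨1, by constructor <;> linarith [hb.1, hb.2]⟩⟩
  haveI : Nonempty (Set.Icc (-1:ℝ) 1) := ⟨⟨1, by norm_num⟩⟩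
  -- boundedness of the sup families
  have bddA : ∀ (a b : ℝ), BddAbove (Set.range fun γ : Set.Icc ((b:ℝ) - 1) 1 => H a b γ) := by
    intro a b
    exact ⟨_, by rintro _ ⟨γ, rfl⟩; exact claim1 a b γ⟩
  have bddB : ∀ (a b : ℝ), BddAbove (Set.range fun γ : Set.Icc (-1:ℝ) 1 => H a b γ) := by
    intro a b
    exact ⟨_, by rintro _ ⟨γ, rfl⟩; exact claim1 a b γ⟩
  -- value of the full sup
  have supB : ∀ a b : ℝ, (⨆ γ : Set.Icc (-1:ℝ) 1, H a b γ) =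
      (IP - 2 * a * EP + a ^ 2) + (IN - 2 * b * EN + b ^ 2) + 2 * d + d ^ 2 := by
    intro a b
    refine le_antisymm (ciSup_le fun γ => claim1 a b γ) ?_
    have := le_ciSup (bddB a b) (⟨d, hd1, hd2⟩ : Set.Icc (-1:ℝ) 1)
    calc _ = H a b d := by rw [hH']; ring
      _ ≤ _ := this
  -- lower bounds for the coupled sups
  have lbA : ∀ (a : ℝ) (b : Set.Icc (0:ℝ) 1), V ≤ ⨆ γ : Set.Icc ((b:ℝ) - 1) 1, H a b γ := by
    intro a b
    haveI := hne b b.2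
    have hmem : max ((b:ℝ) - 1) d ∈ Set.Icc ((b:ℝ) - 1) 1 :=
      ⟨le_max_left _ _, max_le (by linarith [b.2.2]) hd2⟩
    exact le_trans (claim2 b b.2 a) (le_ciSup (bddA a b) (⟨_, hmem⟩ : Set.Icc ((b:ℝ) - 1) 1))
  -- lower bounds for the full sups
  have lbB : ∀ (a b : ℝ), V ≤ ⨆ γ : Set.Icc (-1:ℝ) 1, H a b γ := by
    intro a b; rw [supB]; exact claim3 a b
  -- A = V
  have hA : (⨅ a : Set.Icc (0 : ℝ) 1, ⨅ b : Set.Icc (0 : ℝ) 1,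
      ⨆ γ : Set.Icc ((b : ℝ) - 1) 1, H a b γ) = V := by
    refine le_antisymm ?_ (le_ciInf fun a => le_ciInf fun b => lbA a b)
    have bddI : ∀ a : Set.Icc (0:ℝ) 1, BddBelow (Set.range fun b : Set.Icc (0:ℝ) 1 =>
        ⨆ γ : Set.Icc ((b:ℝ) - 1) 1, H a b γ) :=
      fun a => ⟨V, by rintro _ ⟨b, rfl⟩; exact lbA a b⟩
    have bddO : BddBelow (Set.range fun a : Set.Icc (0:ℝ) 1 => ⨅ b : Set.Icc (0:ℝ) 1,
        ⨆ γ : Set.Icc ((b:ℝ) - 1) 1, H a b γ) :=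
      ⟨V, by rintro _ ⟨a, rfl⟩; exact le_ciInf fun b => lbA a b⟩
    refine ciInf_le_of_le bddO ⟨EP, hmemEP⟩ ?_
    refine ciInf_le_of_le (bddI ⟨EP, hmemEP⟩) ⟨EN, hmemEN⟩ ?_
    haveI := hne EN hmemEN
    refine ciSup_le fun γ => ?_
    rw [hH']
    nlinarith [sq_nonneg ((γ:ℝ) - d)]
  -- B = V
  have hB : (⨅ a : Set.Icc (0 : ℝ) 1, ⨅ b : Set.Icc (0 : ℝ) 1,
      ⨆ γ : Set.Icc (-1:ℝ) 1, H a b γ) = V := by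
    refine le_antisymm ?_ (le_ciInf fun a => le_ciInf fun b => lbB a b)
    have bddI : ∀ a : Set.Icc (0:ℝ) 1, BddBelow (Set.range fun b : Set.Icc (0:ℝ) 1 =>
        ⨆ γ : Set.Icc (-1:ℝ) 1, H a b γ) :=
      fun a => ⟨V, by rintro _ ⟨b, rfl⟩; exact lbB a b⟩
    have bddO : BddBelow (Set.range fun a : Set.Icc (0:ℝ) 1 => ⨅ b : Set.Icc (0:ℝ) 1,
        ⨆ γ : Set.Icc (-1:ℝ) 1, H a b γ) :=
      ⟨V, by rintro _ ⟨a, rfl⟩; exact le_ciInf fun b => lbB a b⟩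
    refine ciInf_le_of_le bddO ⟨EP, hmemEP⟩ ?_
    refine ciInf_le_of_le (bddI ⟨EP, hmemEP⟩) ⟨EN, hmemEN⟩ ?_
    rw [supB]; ring_nf; exact le_of_eq (by rw [hVdef]; ring)
  refine ⟨hA.trans hB.symm, ?_⟩
  rw [hB, hVdef]
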